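/- (Beintema's theorem, socle formulation) Let I be a proper monomial ideal of A such that for every i some power X_i^{c_i} lies in I (so I has height n and A/I is Artinian). Then dim_k soc(A/I) = 1 (equivalently A/I is Gorenstein) if and only if I can be generated by n monomials, i.e. there exist exponent vectors b_1,…,b_n with I = (X^{b_1},…,X^{b_n}) (equivalently, I is a complete intersection, generated by pure powers of the variables). -/

import Mathlib

open MvPolynomial

namespace BeintemaAux

variable {k : Type*} [Field k] {n : ℕ}

/-- The ideal of polynomials supported in an upward-closed set `U`. -/
def upIdeal (U : Set (Fin n →₀ ℕ)) (hU : ∀ ⦃d e : Fin n →₀ ℕ⦄, d ∈ U → d ≤ e → e ∈ U) :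
    Ideal (MvPolynomial (Fin n) k) where
  carrier := {p | ∀ d ∈ p.support, d ∈ U}
  add_mem' := by
    classical
    intro p q hp hq d hd
    rcases Finset.mem_union.1 (MvPolynomial.support_add hd) with h | h
    · exact hp d h
    · exact hq d h
  zero_mem' := by simp
  smul_mem' := by
    classical
    intro c p hp d hd
    rw [smul_eq_mul] at hd
    obtain ⟨d1, _, d2, hd2, rfl⟩ := Finset.mem_add.1 (MvPolynomial.support_mul c p hd)
    exact hU (hp d2 hd2) le_add_self

lemma mem_span_iff {U : Set (Fin n →₀ ℕ)}
    (hU : ∀ ⦃d e : Fin n →₀ ℕ⦄, d ∈ U → d ≤ e → e ∈ U) (p : MvPolynomial (Fin n) k) :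
    p ∈ Ideal.span ((fun a => (monomial a (1 : k) : MvPolynomial (Fin n) k)) '' U) ↔
      ∀ d ∈ p.support, d ∈ U := by
  classical
  constructor
  · intro hp
    have hle : Ideal.span ((fun a => (monomial a (1 : k) : MvPolynomial (Fin n) k)) '' U) ≤
        upIdeal U hU := by
      rw [Ideal.span_le]
      rintro _ ⟨d, hd, rfl⟩ e he
      rw [MvPolynomial.support_monomial, if_neg one_ne_zero, Finset.mem_singleton] at he
      subst he; exact hd
    exact hle hp
  · intro h
    rw [p.as_sum]
    refine Ideal.sum_mem _ fun d hd => ?_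
    have h2 : (monomial d (coeff d p) : MvPolynomial (Fin n) k) = C (coeff d p) * monomial d 1 := by
      rw [C_mul_monomial, mul_one]
    rw [h2]
    exact Ideal.mul_mem_left _ _ (Ideal.subset_span ⟨d, h d hd, rfl⟩)

lemma span_eq_up (S : Set (Fin n →₀ ℕ)) :
    Ideal.span ((fun a => (monomial a (1 : k) : MvPolynomial (Fin n) k)) '' S)
      = Ideal.span ((fun a => (monomial a (1 : k) : MvPolynomial (Fin n) k)) ''
          {d | ∃ s ∈ S, s ≤ d}) := by
  apply le_antisymm
  · exact Ideal.span_mono (Set.image_mono fun s hs => ⟨s, hs, le_rfl⟩)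
  · rw [Ideal.span_le]
    rintro _ ⟨d, ⟨s, hs, hsd⟩, rfl⟩
    have h2 : (monomial d (1 : k) : MvPolynomial (Fin n) k)
        = monomial (d - s) 1 * monomial s 1 := by
      rw [monomial_mul, one_mul, tsub_add_cancel_of_le hsd]
    show (monomial d (1 : k) : MvPolynomial (Fin n) k) ∈ _
    rw [h2]
    exact Ideal.mul_mem_left _ _ (Ideal.subset_span ⟨s, hs, rfl⟩)

lemma mem_monomialIdeal_iff {S : Set (Fin n →₀ ℕ)} (p : MvPolynomial (Fin n) k) :
    p ∈ Ideal.span ((fun a => (monomial a (1 : k) : MvPolynomial (Fin n) k)) '' S) ↔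
      ∀ d ∈ p.support, ∃ s ∈ S, s ≤ d := by
  rw [span_eq_up S,
    mem_span_iff (fun d e hd hde => by
      obtain ⟨s, hs, hsd⟩ := hd; exact ⟨s, hs, hsd.trans hde⟩)]
  rfl

lemma monomial_mem_iff {S : Set (Fin n →₀ ℕ)} (d : Fin n →₀ ℕ) :
    (monomial d (1 : k) : MvPolynomial (Fin n) k) ∈
        Ideal.span ((fun a => (monomial a (1 : k) : MvPolynomial (Fin n) k)) '' S) ↔
      ∃ s ∈ S, s ≤ d := by
  classical
  rw [mem_monomialIdeal_iff]
  rw [MvPolynomial.support_monomial, if_neg one_ne_zero]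
  simp

lemma mem_span_range_X_iff (p : MvPolynomial (Fin n) k) :
    p ∈ Ideal.span (Set.range (X : Fin n → MvPolynomial (Fin n) k)) ↔
      ∀ d ∈ p.support, d ≠ 0 := by
  have hr : Set.range (X : Fin n → MvPolynomial (Fin n) k)
      = (fun a => (monomial a (1 : k) : MvPolynomial (Fin n) k)) ''
          Set.range (fun i : Fin n => Finsupp.single i 1) := by
    rw [← Set.range_comp]
    rfl
  rw [hr, mem_monomialIdeal_iff]
  apply forall_congr'
  intro d
  apply imp_congr_right
  intro _
  constructor
  · rintro ⟨s, ⟨i, rfl⟩, hs⟩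
    intro h0
    rw [h0] at hs
    have := Finsupp.single_le_iff.1 hs
    simp at this
  · intro hd
    obtain ⟨i, hi⟩ := Finsupp.ne_iff.1 hd
    simp only [Finsupp.coe_zero, Pi.zero_apply] at hi
    exact ⟨Finsupp.single i 1, ⟨i, rfl⟩, Finsupp.single_le_iff.2 (Nat.one_le_iff_ne_zero.2 hi)⟩

end BeintemaAux

/-- An ideal of `k[X_1,…,X_n]` is a *monomial ideal* if it is generated by a set
of monomials. -/
def IsMonomialIdeal {k : Type*} [Field k] {n : ℕ}
    (I : Ideal (MvPolynomial (Fin n) k)) : Prop :=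
  ∃ S : Set ((Fin n) →₀ ℕ),
    I = Ideal.span ((fun a => (monomial a (1 : k) : MvPolynomial (Fin n) k)) '' S)

/-- The image of the maximal ideal `(X_1,…,X_n)` in `R = A/I`. -/
noncomputable def maxIdealImage {k : Type*} [Field k] {n : ℕ}
    (I : Ideal (MvPolynomial (Fin n) k)) :
    Ideal (MvPolynomial (Fin n) k ⧸ I) :=
  Ideal.map (Ideal.Quotient.mk I)
    (Ideal.span (Set.range (X : Fin n → MvPolynomial (Fin n) k)))

/-- The socle of `R = A/I`, regarded as a `k`-subspace of `R`. -/
def socle {k : Type*} [Field k] {n : ℕ}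
    (I : Ideal (MvPolynomial (Fin n) k)) :
    Submodule k (MvPolynomial (Fin n) k ⧸ I) where
  carrier := {r | ∀ x ∈ maxIdealImage I, r * x = 0}
  add_mem' := by
    intro r s hr hs x hx
    rw [add_mul, hr x hx, hs x hx, add_zero]
  zero_mem' := by
    intro x hx
    rw [zero_mul]
  smul_mem' := by
    intro c r hr x hx
    rw [smul_mul_assoc, hr x hx, smul_zero]

set_option maxHeartbeats 2000000 in
set_option synthInstance.maxHeartbeats 400000 in
/-- **Beintema's theorem** (socle formulation): for a proper monomial ideal `I`
of height `n` (i.e. containing a power of each variable), `A/I` is Gorenstein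
(has one-dimensional socle) if and only if `I` can be generated by `n`
monomials, i.e. `I` is a complete intersection. -/
theorem beintema_gorenstein_iff_complete_intersection
    {k : Type*} [Field k] {n : ℕ} (hn : 1 ≤ n)
    (I : Ideal (MvPolynomial (Fin n) k)) (hI : IsMonomialIdeal I)
    (hproper : I ≠ ⊤)
    (hartinian : ∀ i : Fin n, ∃ c : ℕ, (X i : MvPolynomial (Fin n) k) ^ c ∈ I) :
    Module.finrank k (socle I) = 1 ↔
      ∃ b : Fin n → ((Fin n) →₀ ℕ),
        I = Ideal.span (Set.range fun i : Fin n =>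
          (monomial (b i) (1 : k) : MvPolynomial (Fin n) k)) := by
  classical
  obtain ⟨S, hS⟩ := hI
  -- basic facts about the monomial ideal `I`
  have hmono : ∀ d, (monomial d (1 : k) : MvPolynomial (Fin n) k) ∈ I ↔ ∃ s ∈ S, s ≤ d := by
    intro d; rw [hS]; exact BeintemaAux.monomial_mem_iff d
  have hmem : ∀ p : MvPolynomial (Fin n) k,
      p ∈ I ↔ ∀ d ∈ p.support, (monomial d (1 : k) : MvPolynomial (Fin n) k) ∈ I := by
    intro p
    conv_lhs => rw [hS]
    rw [BeintemaAux.mem_monomialIdeal_iff]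
    exact forall₂_congr fun d _ => (hmono d).symm
  have hup : ∀ {d e : Fin n →₀ ℕ}, (monomial d (1 : k) : MvPolynomial (Fin n) k) ∈ I →
      d ≤ e → (monomial e (1 : k) : MvPolynomial (Fin n) k) ∈ I := by
    intro d e hd hde
    rw [hmono] at hd ⊢
    obtain ⟨s, hs, h⟩ := hd
    exact ⟨s, hs, h.trans hde⟩
  have hone : (monomial (0 : Fin n →₀ ℕ) (1 : k) : MvPolynomial (Fin n) k) ∉ I := by
    intro h
    apply hproper
    rw [Ideal.eq_top_iff_one]
    have h1 : (monomial (0 : Fin n →₀ ℕ) (1 : k) : MvPolynomial (Fin n) k) = 1 := by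
      simp
    rwa [h1] at h
  choose c hc using hartinian
  have hc' : ∀ i, (monomial (Finsupp.single i (c i)) (1 : k) : MvPolynomial (Fin n) k) ∈ I := by
    intro i
    rw [← X_pow_eq_monomial]
    exact hc i
  have hlt : ∀ d : Fin n →₀ ℕ, (monomial d (1 : k) : MvPolynomial (Fin n) k) ∉ I →
      ∀ i, d i < c i := by
    intro d hd i
    by_contra h
    push_neg at h
    exact hd (hup (hc' i) (Finsupp.single_le_iff.2 h))
  -- existence of maximal standard monomials
  have hexmax : ∀ d : Fin n →₀ ℕ, (monomial d (1 : k) : MvPolynomial (Fin n) k) ∉ I →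
      ∃ m, d ≤ m ∧ (monomial m (1 : k) : MvPolynomial (Fin n) k) ∉ I ∧
        ∀ i, (monomial (m + Finsupp.single i 1) (1 : k) : MvPolynomial (Fin n) k) ∈ I := by
    have key : ∀ t : ℕ, ∀ d : Fin n →₀ ℕ, (∑ i, c i) - (∑ i, d i) ≤ t →
        (monomial d (1 : k) : MvPolynomial (Fin n) k) ∉ I →
        ∃ m, d ≤ m ∧ (monomial m (1 : k) : MvPolynomial (Fin n) k) ∉ I ∧
          ∀ i, (monomial (m + Finsupp.single i 1) (1 : k) : MvPolynomial (Fin n) k) ∈ I := by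
      intro t
      induction t with
      | zero =>
        intro d hd hdI
        exfalso
        have h1 : ∀ i, d i < c i := hlt d hdI
        have h2 : (∑ i, d i) < ∑ i, c i := by
          apply Finset.sum_lt_sum_of_nonempty
          · exact ⟨⟨0, hn⟩, Finset.mem_univ _⟩
          · intro i _; exact h1 i
        omega
      | succ t ih =>
        intro d hd hdI
        by_cases hmax : ∀ i, (monomial (d + Finsupp.single i 1) (1 : k) :
            MvPolynomial (Fin n) k) ∈ I
        · exact ⟨d, le_rfl, hdI, hmax⟩
        · push_neg at hmax
          obtain ⟨i, hi⟩ := hmax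
          have hsum : (∑ j, (d + Finsupp.single i 1 : Fin n →₀ ℕ) j) = (∑ j, d j) + 1 := by
            simp [Finsupp.add_apply, Finset.sum_add_distrib, Finsupp.single_apply]
          obtain ⟨m, hm1, hm2⟩ := ih (d + Finsupp.single i 1) (by rw [hsum]; omega) hi
          exact ⟨m, le_trans le_self_add hm1, hm2⟩
    intro d hd
    exact key _ d le_rfl hd
  -- socle membership of maximal standard monomials
  have hsoc : ∀ m : Fin n →₀ ℕ,
      (∀ i, (monomial (m + Finsupp.single i 1) (1 : k) : MvPolynomial (Fin n) k) ∈ I) →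
      (Ideal.Quotient.mk I (monomial m (1 : k))) ∈ socle I := by
    intro m hm x hx
    obtain ⟨y, hy, rfl⟩ :=
      (Ideal.mem_map_iff_of_surjective _ Ideal.Quotient.mk_surjective).1 hx
    rw [← map_mul, Ideal.Quotient.eq_zero_iff_mem]
    rw [hmem]
    intro d hd
    obtain ⟨d1, hd1, d2, hd2, rfl⟩ :=
      Finset.mem_add.1 (MvPolynomial.support_mul (monomial m (1 : k)) y hd)
    rw [MvPolynomial.support_monomial, if_neg one_ne_zero, Finset.mem_singleton] at hd1
    subst hd1
    have hy2 : d2 ≠ 0 := (BeintemaAux.mem_span_range_X_iff y).1 hy d2 hd2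
    obtain ⟨i, hi⟩ := Finsupp.ne_iff.1 hy2
    simp only [Finsupp.coe_zero, Pi.zero_apply] at hi
    exact hup (hm i)
      (add_le_add_right (Finsupp.single_le_iff.2 (Nat.one_le_iff_ne_zero.2 hi)) d1)
  have mk_smul : ∀ (r : k) (p : MvPolynomial (Fin n) k),
      Ideal.Quotient.mk I (r • p) = r • Ideal.Quotient.mk I p := by
    intro r p
    rw [← Ideal.Quotient.mkₐ_eq_mk k, map_smul]
  constructor
  · -- Gorenstein ⇒ complete intersection
    intro hdim
    obtain ⟨v, hv0, hv⟩ := finrank_eq_one_iff'.1 hdim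
    have huniq : ∀ m1 m2 : Fin n →₀ ℕ,
        ((monomial m1 (1 : k) : MvPolynomial (Fin n) k) ∉ I ∧
          ∀ i, (monomial (m1 + Finsupp.single i 1) (1 : k) : MvPolynomial (Fin n) k) ∈ I) →
        ((monomial m2 (1 : k) : MvPolynomial (Fin n) k) ∉ I ∧
          ∀ i, (monomial (m2 + Finsupp.single i 1) (1 : k) : MvPolynomial (Fin n) k) ∈ I) →
        m1 = m2 := by
      intro m1 m2 h1 h2
      by_contra hne
      set u1 : socle I := ⟨Ideal.Quotient.mk I (monomial m1 1), hsoc m1 h1.2⟩ with hu1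
      set u2 : socle I := ⟨Ideal.Quotient.mk I (monomial m2 1), hsoc m2 h2.2⟩ with hu2
      obtain ⟨c1, hc1⟩ := hv u1
      obtain ⟨c2, hc2⟩ := hv u2
      have hc1ne : c1 ≠ 0 := by
        rintro rfl
        rw [zero_smul] at hc1
        apply h1.1
        have hval : Ideal.Quotient.mk I (monomial m1 (1 : k)) = 0 := by
          have := congrArg Subtype.val hc1
          simpa [hu1] using this.symm
        rwa [Ideal.Quotient.eq_zero_iff_mem] at hval
      have hu : u2 = (c2 * c1⁻¹) • u1 := by
        rw [← hc1, ← hc2, smul_smul]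
        congr 1
        field_simp
      have hval : Ideal.Quotient.mk I (monomial m2 (1 : k))
          = Ideal.Quotient.mk I ((c2 * c1⁻¹) • monomial m1 (1 : k)) := by
        have h3 := congrArg Subtype.val hu
        simp only [hu1, hu2, SetLike.mk_smul_mk] at h3
        rw [h3, mk_smul]
      rw [Ideal.Quotient.eq] at hval
      apply h2.1
      refine (hmem _).1 hval m2 ?_
      rw [mem_support_iff, coeff_sub, coeff_smul, coeff_monomial, coeff_monomial,
        if_pos rfl, if_neg hne]
      simp
    obtain ⟨a, -, haI, hamax⟩ := hexmax 0 hone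
    have hchar : ∀ d : Fin n →₀ ℕ,
        (monomial d (1 : k) : MvPolynomial (Fin n) k) ∈ I ↔ ∃ i, a i + 1 ≤ d i := by
      intro d
      constructor
      · intro hd
        by_contra h
        push_neg at h
        have hda : d ≤ a := Finsupp.le_def.2 fun i => by have := h i; omega
        exact haI (hup hd hda)
      · rintro ⟨i, hi⟩
        by_contra hd
        obtain ⟨m, hdm, hm1, hm2⟩ := hexmax d hd
        have hma : m = a := huniq m a ⟨hm1, hm2⟩ ⟨haI, hamax⟩
        subst hma
        have := Finsupp.le_def.1 hdm i
        omega
    refine ⟨fun i => Finsupp.single i (a i + 1), ?_⟩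
    have hrange : (Set.range fun i : Fin n =>
          (monomial (Finsupp.single i (a i + 1)) (1 : k) : MvPolynomial (Fin n) k))
        = (fun e => (monomial e (1 : k) : MvPolynomial (Fin n) k)) ''
            Set.range (fun i : Fin n => Finsupp.single i (a i + 1)) := by
      rw [← Set.range_comp]; rfl
    ext p
    rw [hmem p, hrange, BeintemaAux.mem_monomialIdeal_iff]
    refine forall₂_congr fun d _ => ?_
    rw [hchar d]
    constructor
    · rintro ⟨i, hi⟩
      exact ⟨Finsupp.single i (a i + 1), ⟨i, rfl⟩, Finsupp.single_le_iff.2 hi⟩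
    · rintro ⟨s, ⟨i, rfl⟩, hs⟩
      exact ⟨i, Finsupp.single_le_iff.1 hs⟩
  · -- complete intersection ⇒ Gorenstein
    rintro ⟨b, hb⟩
    have hrange : (Set.range fun i : Fin n =>
          (monomial (b i) (1 : k) : MvPolynomial (Fin n) k))
        = (fun e => (monomial e (1 : k) : MvPolynomial (Fin n) k)) '' Set.range b := by
      rw [← Set.range_comp]; rfl
    have hmonoB : ∀ d : Fin n →₀ ℕ,
        (monomial d (1 : k) : MvPolynomial (Fin n) k) ∈ I ↔ ∃ j, b j ≤ d := by
      intro d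
      rw [hb, hrange, BeintemaAux.monomial_mem_iff]
      simp
    have hbne : ∀ j, b j ≠ 0 := by
      intro j hj
      exact hone (hj ▸ (hmonoB (b j)).2 ⟨j, le_rfl⟩)
    have hpure : ∀ i, ∃ j, b j = Finsupp.single i (b j i) ∧ 1 ≤ b j i := by
      intro i
      obtain ⟨j, hj⟩ := (hmonoB (Finsupp.single i (c i))).1 (hc' i)
      have hjeq : b j = Finsupp.single i (b j i) := by
        ext i'
        by_cases h : i' = i
        · subst h; simp
        · have h2 := Finsupp.le_def.1 hj i'
          rw [Finsupp.single_apply, if_neg (fun hh => h hh.symm)] at h2 ⊢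
          omega
      refine ⟨j, hjeq, ?_⟩
      by_contra h
      push_neg at h
      apply hbne j
      rw [hjeq]
      have : b j i = 0 := by omega
      rw [this, Finsupp.single_zero]
    choose f hf1 hf2 using hpure
    have hinj : Function.Injective f := by
      intro i1 i2 h
      by_contra hne
      have h1 := hf1 i1
      rw [h] at h1
      have h3 : b (f i2) i2 = 0 := by
        rw [h1, Finsupp.single_apply, if_neg hne]
      have := hf2 i2
      omega
    have hsurj : Function.Surjective f := Finite.injective_iff_surjective.1 hinj
    have hmonoI : ∀ d : Fin n →₀ ℕ,
        (monomial d (1 : k) : MvPolynomial (Fin n) k) ∈ I ↔ ∃ i, b (f i) i ≤ d i := by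
      intro d
      rw [hmonoB]
      constructor
      · rintro ⟨j, hj⟩
        obtain ⟨i, rfl⟩ := hsurj j
        rw [hf1 i] at hj
        exact ⟨i, Finsupp.single_le_iff.1 hj⟩
      · rintro ⟨i, hi⟩
        refine ⟨f i, ?_⟩
        rw [hf1 i]
        exact Finsupp.single_le_iff.2 hi
    set a : Fin n →₀ ℕ := Finsupp.equivFunOnFinite.symm (fun i => b (f i) i - 1) with ha
    have haval : ∀ i, a i = b (f i) i - 1 := fun i => rfl
    have hanotI : (monomial a (1 : k) : MvPolynomial (Fin n) k) ∉ I := by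
      rw [hmonoI]
      rintro ⟨i, hi⟩
      have h1 := hf2 i
      have h2 := haval i
      omega
    have hamax : ∀ i, (monomial (a + Finsupp.single i 1) (1 : k) : MvPolynomial (Fin n) k) ∈ I := by
      intro i
      rw [hmonoI]
      refine ⟨i, ?_⟩
      have h1 := hf2 i
      have h2 := haval i
      have h3 : (a + Finsupp.single i 1 : Fin n →₀ ℕ) i = a i + 1 := by simp
      omega
    rw [finrank_eq_one_iff']
    refine ⟨⟨Ideal.Quotient.mk I (monomial a 1), hsoc a hamax⟩, ?_, ?_⟩
    · intro h0
      apply hanotI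
      have hval : Ideal.Quotient.mk I (monomial a (1 : k)) = 0 := by
        have := congrArg Subtype.val h0
        simpa using this
      rwa [Ideal.Quotient.eq_zero_iff_mem] at hval
    · rintro ⟨w, hw⟩
      obtain ⟨p, rfl⟩ := Ideal.Quotient.mk_surjective w
      set p' : MvPolynomial (Fin n) k :=
        ∑ d ∈ p.support.filter
            (fun d => (monomial d (1 : k) : MvPolynomial (Fin n) k) ∉ I),
          monomial d (coeff d p) with hp'
      have hpp' : Ideal.Quotient.mk I p = Ideal.Quotient.mk I p' := by
        rw [Ideal.Quotient.eq]
        have hdiff : p - p' = ∑ d ∈ p.support.filter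
            (fun d => (monomial d (1 : k) : MvPolynomial (Fin n) k) ∈ I),
            monomial d (coeff d p) := by
          conv_lhs => rw [p.as_sum,
            ← Finset.sum_filter_add_sum_filter_not p.support
              (fun d => (monomial d (1 : k) : MvPolynomial (Fin n) k) ∈ I)]
          rw [hp']
          abel
        rw [hdiff]
        refine Ideal.sum_mem _ fun d hd => ?_
        rw [Finset.mem_filter] at hd
        have h2 : (monomial d (coeff d p) : MvPolynomial (Fin n) k)
            = C (coeff d p) * monomial d 1 := by rw [C_mul_monomial, mul_one]
        rw [h2]
        exact Ideal.mul_mem_left _ _ hd.2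
      have hcoeff : ∀ e₀ : Fin n →₀ ℕ, coeff e₀ p' =
          if e₀ ∈ p.support.filter
              (fun d => (monomial d (1 : k) : MvPolynomial (Fin n) k) ∉ I)
          then coeff e₀ p else 0 := by
        intro e₀
        rw [hp', MvPolynomial.coeff_sum]
        simp only [coeff_monomial]
        exact Finset.sum_ite_eq' _ e₀ _
      have hsubsing : ∀ d ∈ p'.support, d = a := by
        intro d hd
        rw [mem_support_iff, hcoeff d] at hd
        by_cases hda : d = a
        · exact hda
        exfalso
        by_cases hfilter : d ∈ p.support.filter
            (fun d => (monomial d (1 : k) : MvPolynomial (Fin n) k) ∉ I)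
        swap
        · rw [if_neg hfilter] at hd; exact hd rfl
        rw [if_pos hfilter] at hd
        rw [Finset.mem_filter] at hfilter
        have hdle : ∀ i', d i' ≤ a i' := by
          intro i'
          have h2 := hfilter.2
          rw [hmonoI] at h2
          push_neg at h2
          have h3 := h2 i'
          have h4 := hf2 i'
          have h5 := haval i'
          omega
        have hstrict : ∃ i, d i < a i := by
          by_contra hno
          push_neg at hno
          exact hda (Finsupp.ext fun i => le_antisymm (hdle i) (hno i))
        obtain ⟨i, hi⟩ := hstrict
        have hXmem : (Ideal.Quotient.mk I (X i)) ∈ maxIdealImage I :=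
          Ideal.mem_map_of_mem _ (Ideal.subset_span ⟨i, rfl⟩)
        have h0 := hw _ hXmem
        have hPX : p' * X i ∈ I := by
          rw [← Ideal.Quotient.eq_zero_iff_mem, map_mul, ← hpp']
          exact h0
        have hdd : (monomial (d + Finsupp.single i 1) (1 : k) : MvPolynomial (Fin n) k) ∈ I := by
          refine (hmem _).1 hPX _ ?_
          rw [mem_support_iff, coeff_mul_X]
          rw [hcoeff d, if_pos (Finset.mem_filter.2 hfilter)]
          exact hd
        rw [hmonoI] at hdd
        obtain ⟨i', hi'⟩ := hdd
        have h6 : (d + Finsupp.single i 1 : Fin n →₀ ℕ) i' = d i' + (if i = i' then 1 else 0) := by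
          simp [Finsupp.single_apply]
        have h7 := hdle i'
        have h8 := hf2 i'
        have h9 := haval i'
        by_cases hii : i = i'
        · subst hii
          rw [Finsupp.add_apply, Finsupp.single_eq_same] at hi'
          omega
        · rw [if_neg hii] at h6; omega
      have hp'eq : p' = monomial a (coeff a p') := by
        ext e₀
        rw [coeff_monomial]
        by_cases h : a = e₀
        · rw [if_pos h, h]
        · rw [if_neg h]
          by_contra hne
          exact h ((hsubsing e₀ (mem_support_iff.2 hne)).symm)
      refine ⟨coeff a p', ?_⟩
      apply Subtype.ext
      show coeff a p' • (Ideal.Quotient.mk I (monomial a (1 : k))) = Ideal.Quotient.mk I p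
      rw [← mk_smul, hpp']
      congr 1
      rw [MvPolynomial.smul_monomial, smul_eq_mul, mul_one, ← hp'eq]
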